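/- Euler's finite differential equation between the rectangle and the minimal-perimeter ellipse (E563 Problem 3): let z : (0,1) → ℝ be differentiable and satisfy the Riccati equation z'(x) = x/(4·(1 − x²)) + z(x)²/x for all x ∈ (0,1), and suppose 1 + x² − 2·(1 − x²)·z(x) ≠ 0 for all x ∈ (0,1). Define i : (0,1) → ℝ by i(x) = (2·x² − 2·(1 − x²)·z(x))/(x·(1 + x² − 2·(1 − x²)·z(x))). Then i is differentiable on (0,1) and for all x ∈ (0,1): −2·x·(1 − x²)²·i'(x) = −7·x + 3·x³ + 2·i(x)·(1 + 3·x²) + i(x)²·x·(1 − 5·x²). -/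

import Mathlib

set_option maxHeartbeats 2000000 in
/-- E563, Problem 3: if `z` satisfies the Riccati equation
`z'(x) = x/(4(1−x²)) + z(x)²/x` on `(0,1)` and
`i(x) = (2x² − 2(1−x²)z(x))/(x(1 + x² − 2(1−x²)z(x)))`, then `i` is
differentiable on `(0,1)` and satisfies Euler's finite differential equation
`−2x(1−x²)² i'(x) = −7x + 3x³ + 2i(x)(1+3x²) + i(x)²·x·(1−5x²)`. -/
theorem euler_finite_differential_equation (z : ℝ → ℝ)
    (hz : ∀ x ∈ Set.Ioo (0 : ℝ) 1,
      HasDerivAt z (x / (4 * (1 - x ^ 2)) + (z x) ^ 2 / x) x)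
    (hne : ∀ x ∈ Set.Ioo (0 : ℝ) 1, 1 + x ^ 2 - 2 * (1 - x ^ 2) * z x ≠ 0) :
    ∀ x ∈ Set.Ioo (0 : ℝ) 1,
      DifferentiableAt ℝ
        (fun x => (2 * x ^ 2 - 2 * (1 - x ^ 2) * z x)
          / (x * (1 + x ^ 2 - 2 * (1 - x ^ 2) * z x))) x ∧
      -2 * x * (1 - x ^ 2) ^ 2 *
          deriv (fun x => (2 * x ^ 2 - 2 * (1 - x ^ 2) * z x)
            / (x * (1 + x ^ 2 - 2 * (1 - x ^ 2) * z x))) x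
        = -7 * x + 3 * x ^ 3
          + 2 * ((2 * x ^ 2 - 2 * (1 - x ^ 2) * z x)
              / (x * (1 + x ^ 2 - 2 * (1 - x ^ 2) * z x))) * (1 + 3 * x ^ 2)
          + ((2 * x ^ 2 - 2 * (1 - x ^ 2) * z x)
              / (x * (1 + x ^ 2 - 2 * (1 - x ^ 2) * z x))) ^ 2 * x * (1 - 5 * x ^ 2) := by
  intro x hx
  obtain ⟨hx0, hx1⟩ := hx
  have hx0' : x ≠ 0 := ne_of_gt hx0
  have hx1' : (1 : ℝ) - x ^ 2 ≠ 0 := by nlinarith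
  have hD : 1 + x ^ 2 - 2 * (1 - x ^ 2) * z x ≠ 0 := hne x ⟨hx0, hx1⟩
  have hxD : x * (1 + x ^ 2 - 2 * (1 - x ^ 2) * z x) ≠ 0 := mul_ne_zero hx0' hD
  set w := z x with hw
  set w' := x / (4 * (1 - x ^ 2)) + w ^ 2 / x with hw'
  have hzx : HasDerivAt z w' x := hz x ⟨hx0, hx1⟩
  have hN : HasDerivAt (fun x => 2 * x ^ 2 - 2 * (1 - x ^ 2) * z x)
      (4 * x - (2 * (-(2 * x)) * w + 2 * (1 - x ^ 2) * w')) x := by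
    have h1 : HasDerivAt (fun x : ℝ => 2 * x ^ 2) (4 * x) x := by
      have := (hasDerivAt_pow 2 x).const_mul 2
      exact this.congr_deriv (by push_cast; ring)
    have h2 : HasDerivAt (fun x : ℝ => 2 * (1 - x ^ 2)) (2 * (-(2 * x))) x := by
      have := ((hasDerivAt_pow 2 x).const_sub 1).const_mul 2
      simpa using this
    exact h1.sub (h2.mul hzx)
  have hDd : HasDerivAt (fun x => 1 + x ^ 2 - 2 * (1 - x ^ 2) * z x)
      (2 * x - (2 * (-(2 * x)) * w + 2 * (1 - x ^ 2) * w')) x := by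
    have h1 : HasDerivAt (fun x : ℝ => 1 + x ^ 2) (2 * x) x := by
      simpa using (hasDerivAt_pow 2 x).const_add 1
    have h2 : HasDerivAt (fun x : ℝ => 2 * (1 - x ^ 2)) (2 * (-(2 * x))) x := by
      have := ((hasDerivAt_pow 2 x).const_sub 1).const_mul 2
      simpa using this
    exact h1.sub (h2.mul hzx)
  have hDen : HasDerivAt (fun x => x * (1 + x ^ 2 - 2 * (1 - x ^ 2) * z x))
      (1 * (1 + x ^ 2 - 2 * (1 - x ^ 2) * w)
        + x * (2 * x - (2 * (-(2 * x)) * w + 2 * (1 - x ^ 2) * w'))) x :=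
    (hasDerivAt_id x).mul hDd
  have hi : HasDerivAt (fun x => (2 * x ^ 2 - 2 * (1 - x ^ 2) * z x)
      / (x * (1 + x ^ 2 - 2 * (1 - x ^ 2) * z x)))
      (((4 * x - (2 * (-(2 * x)) * w + 2 * (1 - x ^ 2) * w'))
          * (x * (1 + x ^ 2 - 2 * (1 - x ^ 2) * w))
        - (2 * x ^ 2 - 2 * (1 - x ^ 2) * w)
          * (1 * (1 + x ^ 2 - 2 * (1 - x ^ 2) * w)
            + x * (2 * x - (2 * (-(2 * x)) * w + 2 * (1 - x ^ 2) * w'))))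
        / (x * (1 + x ^ 2 - 2 * (1 - x ^ 2) * w)) ^ 2) x := hN.div hDen hxD
  refine ⟨hi.differentiableAt, ?_⟩
  rw [hi.deriv]
  have h4 : (4 : ℝ) * (1 - x ^ 2) ≠ 0 := mul_ne_zero (by norm_num) hx1'
  have e1 : w' = (x ^ 2 + 4 * (1 - x ^ 2) * w ^ 2) / (4 * (1 - x ^ 2) * x) := by
    rw [hw']; field_simp
  rw [e1]
  have h5 : (4 : ℝ) * (1 - x ^ 2) * x ≠ 0 := mul_ne_zero h4 hx0'
  field_simp
  ring
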